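/- Let λ be a Cremer number, n ≥ 1, and let a(x) = Σ_{j=1}^∞ (2j/Mⱼ)^{mⱼ} x_{[j]}^{mⱼ} where (mⱼ), (Mⱼ), (kⱼ), (rⱼ) satisfy conditions (C1)–(C5). Then the automorphism F(x, y) = (λx, y + a(x)) of ℂ^{n+1} has the finite orbits property in every set of the form ℂⁿ × U with U ⊆ ℂ a bounded open set: for every p ∈ ℂⁿ × U, the set of j ∈ ℤ such that Fᵏ(p) ∈ ℂⁿ × U for all k between 0 and j is finite, or p lies on the fixed-point set {x = 0}. -/

import Mathlib

open Topology Filter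

/-- `λ` is a Cremer number: it has modulus one, is not a root of unity, and
`liminf_{m→∞} |λᵐ − 1|^{1/m} = 0`. -/
def IsCremer (lam : ℂ) : Prop :=
  ‖lam‖ = 1 ∧ (∀ k : ℕ, 1 ≤ k → lam ^ k ≠ 1) ∧
    Filter.liminf (fun m : ℕ => ‖lam ^ m - 1‖ ^ ((1 : ℝ) / m)) Filter.atTop = 0

/-- `resIdx n hn j` is the (0-based) index in `Fin n` corresponding to the unique element of
`{1, ..., n}` congruent to `j` modulo `n`. -/
def resIdx (n : ℕ) (hn : 0 < n) (j : ℕ) : Fin n := ⟨(j - 1) % n, Nat.mod_lt _ hn⟩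

/-- The `j`-th iterate (`j ∈ ℤ`) of an invertible map `F` with inverse `Finv`. -/
def zIter {α : Type*} (F Finv : α → α) (j : ℤ) (p : α) : α :=
  if 0 ≤ j then F^[j.toNat] p else Finv^[(-j).toNat] p

noncomputable def Complex.abs : AbsoluteValue ℂ ℝ := NormedField.toAbsoluteValue ℂ

lemma Complex.norm_eq_abs (z : ℂ) : ‖z‖ = Complex.abs z := rfl

lemma Complex.abs_ofReal (r : ℝ) : Complex.abs (r : ℂ) = |r| := Complex.norm_real r

section auxlemmas
open Finset

private lemma absgeom_le (ν : ℂ) (h : Complex.abs ν = 1) (K : ℕ) :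
    Complex.abs (∑ t ∈ Finset.range K, ν ^ t) ≤ K := by
  calc Complex.abs (∑ t ∈ Finset.range K, ν ^ t)
      ≤ ∑ t ∈ Finset.range K, Complex.abs (ν ^ t) := Complex.abs.sum_le _ _
    _ = ∑ t ∈ Finset.range K, 1 := by
        refine Finset.sum_congr rfl fun t _ => ?_
        rw [map_pow, h, one_pow]
    _ = K := by simp

private lemma abs_inv_sub_one (z : ℂ) (h : Complex.abs z = 1) :
    Complex.abs (z⁻¹ - 1) = Complex.abs (z - 1) := by
  have hz : z ≠ 0 := by
    intro h0; rw [h0] at h; simp at h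
  have : z⁻¹ - 1 = z⁻¹ * (1 - z) := by field_simp
  rw [this, map_mul, map_inv₀, h, inv_one, one_mul, AbsoluteValue.map_sub]

private lemma abs_sub_le' (A B : ℂ) :
    Complex.abs (A - B) ≤ Complex.abs A + Complex.abs B := by
  calc Complex.abs (A - B) ≤ Complex.abs A + Complex.abs (-B) := by
        simpa [sub_eq_add_neg] using Complex.abs.add_le A (-B)
    _ = Complex.abs A + Complex.abs B := by rw [AbsoluteValue.map_neg]

private lemma absgeom_eq (ν : ℂ) (h : ν ≠ 1) (K : ℕ) :
    Complex.abs (∑ t ∈ Finset.range K, ν ^ t)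
      = Complex.abs (ν ^ K - 1) / Complex.abs (ν - 1) := by
  rw [geom_sum_eq h, map_div₀]


private lemma master (m : ℕ → ℕ) (M : ℕ → ℝ)
    (hM4 : ∀ l : ℕ, 1 ≤ l → 4*(l:ℝ)^2 ≤ M l) (hMpos : ∀ l : ℕ, 1 ≤ l → 0 < M l)
    (hmge : ∀ l : ℕ, 1 ≤ l → l ≤ m l)
    (z : ℕ → ℂ) (B : ℕ) (hB : 1 ≤ B)
    (hz : ∀ l : ℕ, Complex.abs (z l) ≤ (B:ℝ)^(m (l+1))) :
    (∀ l : ℕ, Complex.abs ((((2*((l:ℝ)+1))/M (l+1) : ℝ):ℂ)^(m (l+1)) * z l)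
        ≤ ((B:ℝ)/(2*((l:ℝ)+1)))^(m (l+1))) ∧
    Summable (fun l : ℕ => Complex.abs ((((2*((l:ℝ)+1))/M (l+1) : ℝ):ℂ)^(m (l+1)) * z l)) := by
  have hq : ∀ l : ℕ, (0:ℝ) ≤ 2*((l:ℝ)+1)/M (l+1) ∧ 2*((l:ℝ)+1)/M (l+1) ≤ 1/(2*((l:ℝ)+1)) := by
    intro l
    have hM := hMpos (l+1) (by omega)
    have h4 := hM4 (l+1) (by omega)
    push_cast at h4
    constructor
    · positivity
    · rw [div_le_div_iff₀ hM (by positivity)]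
      nlinarith [Nat.cast_nonneg (α := ℝ) l]
  have hbound : ∀ l : ℕ, Complex.abs ((((2*((l:ℝ)+1))/M (l+1) : ℝ):ℂ)^(m (l+1)) * z l)
      ≤ ((B:ℝ)/(2*((l:ℝ)+1)))^(m (l+1)) := by
    intro l
    rw [map_mul, map_pow, Complex.abs_ofReal, abs_of_nonneg (hq l).1]
    have h1 : (2*((l:ℝ)+1)/M (l+1))^(m (l+1)) ≤ (1/(2*((l:ℝ)+1)))^(m (l+1)) :=
      pow_le_pow_left₀ (hq l).1 (hq l).2 _
    calc (2*((l:ℝ)+1)/M (l+1))^(m (l+1)) * Complex.abs (z l)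
        ≤ (1/(2*((l:ℝ)+1)))^(m (l+1)) * (B:ℝ)^(m (l+1)) := by
          apply mul_le_mul h1 (hz l) (Complex.abs.nonneg _) (by positivity)
      _ = ((B:ℝ)/(2*((l:ℝ)+1)))^(m (l+1)) := by
          rw [← mul_pow]; ring_nf
  refine ⟨hbound, ?_⟩
  have hgeo : Summable (fun l : ℕ => ((1:ℝ)/2)^l) :=
    summable_geometric_of_lt_one (by norm_num) (by norm_num)
  have hg : Summable (fun l : ℕ => ((B:ℝ)/(2*((l:ℝ)+1)))^(m (l+1))) := by
    rw [← summable_nat_add_iff B]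
    have hle : ∀ l : ℕ, ((B:ℝ)/(2*((↑(l+B):ℝ)+1)))^(m (l+B+1)) ≤ ((1:ℝ)/2)^l := by
      intro l
      have hbase : (B:ℝ)/(2*((↑(l+B):ℝ)+1)) ≤ 1/2 := by
        rw [div_le_div_iff₀ (by positivity) (by norm_num)]
        push_cast
        nlinarith [Nat.cast_nonneg (α := ℝ) l]
      have hexp : l ≤ m (l + B + 1) := le_trans (by omega) (hmge (l+B+1) (by omega))
      calc ((B:ℝ)/(2*((↑(l+B):ℝ)+1)))^(m (l+B+1))
          ≤ ((1:ℝ)/2)^(m (l+B+1)) := pow_le_pow_left₀ (by positivity) hbase _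
        _ ≤ ((1:ℝ)/2)^l := pow_le_pow_of_le_one (by norm_num) (by norm_num) hexp
    exact Summable.of_nonneg_of_le (fun l => by positivity) hle hgeo
  exact Summable.of_nonneg_of_le (fun l => Complex.abs.nonneg _) hbound hg


private lemma sum_Ico_nonneg (m : ℕ → ℕ) (j : ℕ) :
    0 ≤ ∑ l ∈ Finset.Ico 1 j, 2 * (2 * (l : ℝ)) ^ m l * (j : ℝ) ^ m l :=
  Finset.sum_nonneg fun l _ => by positivity

private lemma m_pos_of_C2 (m : ℕ → ℕ) (M : ℕ → ℝ)
    (hC2 : ∀ j : ℕ, 1 ≤ j → (1 : ℝ) + j + ∑ l ∈ Finset.Ico 1 j,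
        2 * (2 * (l : ℝ)) ^ m l * (j : ℝ) ^ m l ≤ (2 : ℝ) ^ m j)
    (j : ℕ) (hj : 1 ≤ j) : 1 ≤ m j := by
  by_contra h
  have hm0 : m j = 0 := by omega
  have := hC2 j hj
  rw [hm0, pow_zero] at this
  have h1 : (1:ℝ) ≤ (j:ℝ) := by exact_mod_cast hj
  nlinarith [sum_Ico_nonneg m j]

private lemma M_identity (lam : ℂ) (hlam2 : ∀ k : ℕ, 1 ≤ k → lam ^ k ≠ 1)
    (m : ℕ → ℕ) (M : ℕ → ℝ)
    (hC1 : ∀ j : ℕ, 1 ≤ j → M j = Complex.abs (lam ^ m j - 1) ^ (-(1 : ℝ) / (m j)))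
    (j : ℕ) (hj : 1 ≤ j) (hmj : 1 ≤ m j) :
    0 < Complex.abs (lam ^ m j - 1) ∧ 0 < M j ∧
      Complex.abs (lam ^ m j - 1) * M j ^ m j = 1 := by
  have hne : lam ^ m j ≠ 1 := hlam2 (m j) hmj
  have hA : 0 < Complex.abs (lam ^ m j - 1) :=
    Complex.abs.pos (sub_ne_zero.mpr hne)
  have hMj := hC1 j hj
  have hMpos : 0 < M j := by rw [hMj]; exact Real.rpow_pos_of_pos hA _
  refine ⟨hA, hMpos, ?_⟩
  have hmne : (m j : ℝ) ≠ 0 := by positivity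
  have : M j ^ m j = Complex.abs (lam ^ m j - 1) ^ ((-(1:ℝ) / (m j)) * (m j)) := by
    rw [hMj, ← Real.rpow_natCast (Complex.abs (lam ^ m j - 1) ^ (-(1 : ℝ) / (m j))) (m j),
      ← Real.rpow_mul hA.le]
  rw [this]
  have hexp : (-(1:ℝ) / (m j)) * (m j) = -1 := by field_simp
  rw [hexp, Real.rpow_neg_one, mul_inv_cancel₀ hA.ne']

private lemma mono_of_C3 (m r : ℕ → ℕ)
    (hC3 : ∀ j : ℕ, 2 ≤ j → max (m (j - 1)) (r (j - 1)) < min (m j) (r j))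
    (hm1 : 1 ≤ m 1) :
    (∀ j : ℕ, 1 ≤ j → j ≤ m j) ∧
    (∀ j : ℕ, 1 ≤ j → ∀ s : ℕ, r j + s + 1 ≤ m (j + s + 1)) := by
  have hsucc : ∀ j : ℕ, 1 ≤ j → max (m j) (r j) < min (m (j+1)) (r (j+1)) := by
    intro j hj
    have := hC3 (j+1) (by omega)
    simpa using this
  constructor
  · intro j hj
    induction j with
    | zero => omega
    | succ i ih =>
      rcases Nat.eq_or_lt_of_le hj with h | h
      · simpa [← h] using hm1
      · have hi : 1 ≤ i := by omega
        have h1 := hsucc i hi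
        have : m i < m (i+1) := lt_of_le_of_lt (le_max_left _ _) (lt_of_lt_of_le h1 (min_le_left _ _))
        have := ih hi
        omega
  · intro j hj s
    suffices h : r j + s + 1 ≤ min (m (j + s + 1)) (r (j + s + 1)) by
      exact le_trans h (min_le_left _ _)
    induction s with
    | zero =>
      have h1 := hsucc j hj
      have h2 : r j ≤ max (m j) (r j) := le_max_right _ _
      simp only [Nat.add_zero]
      omega
    | succ s ih =>
      have h1 := hsucc (j + s + 1) (by omega)
      have h2 : r (j + s + 1) ≤ max (m (j+s+1)) (r (j+s+1)) := le_max_right _ _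
      have h3 : j + s + 1 + 1 = j + (s+1) + 1 := by omega
      rw [h3] at h1
      omega

set_option maxHeartbeats 2000000 in
private lemma key_estimate
    (n : ℕ) (hn : 0 < n) (lam : ℂ) (hlam1 : Complex.abs lam = 1)
    (hlam2 : ∀ s : ℕ, 1 ≤ s → lam ^ s ≠ 1)
    (m : ℕ → ℕ) (M : ℕ → ℝ) (K : ℕ) (rj : ℕ)
    (hM4 : ∀ l : ℕ, 1 ≤ l → 4*(l:ℝ)^2 ≤ M l)
    (hMpos : ∀ l : ℕ, 1 ≤ l → 0 < M l)
    (hAM : ∀ l : ℕ, 1 ≤ l → Complex.abs (lam ^ m l - 1) * M l ^ m l = 1)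
    (hm1 : ∀ l : ℕ, 1 ≤ l → 1 ≤ m l)
    (hmge : ∀ l : ℕ, 1 ≤ l → l ≤ m l)
    (j : ℕ) (hj : 1 ≤ j)
    (hrm : ∀ s : ℕ, rj + s + 1 ≤ m (j + s + 1))
    (hC2j : (1 : ℝ) + j + ∑ l ∈ Finset.Ico 1 j,
        2 * (2 * (l : ℝ)) ^ m l * (j : ℝ) ^ m l ≤ (2 : ℝ) ^ m j)
    (hC4j : 1 ≤ Complex.abs (lam ^ (K * m j) - 1))
    (hC5j : (K : ℝ) * ∑' i : ℕ, ((1 : ℝ) / 2) ^ (i + rj) < 1)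
    (hK1 : 1 ≤ K)
    (x : Fin n → ℂ) (hxle : ∀ i, Complex.abs (x i) ≤ j)
    (hxge : 1/(j:ℝ) ≤ Complex.abs (x (resIdx n hn j)))
    (w ν : ℕ → ℂ) (hw : ∀ l, Complex.abs (w l) = 1)
    (hν : ∀ l : ℕ, ν l = lam ^ (m (l+1)) ∨ ν l = (lam ^ (m (l+1)))⁻¹) :
    (j:ℝ) ≤ Complex.abs (∑' l : ℕ, (((2*((l:ℝ)+1))/M (l+1) : ℝ):ℂ)^(m (l+1)) *
      (x (resIdx n hn (l+1)) ^ (m (l+1)) * (w l * ∑ t ∈ Finset.range K, ν l ^ t))) := by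
  -- abbreviations
  set q : ℕ → ℝ := fun l => 2*((l:ℝ)+1)/M (l+1) with hq_def
  set P : ℕ → ℂ := fun l => ∑ t ∈ Finset.range K, ν l ^ t with hP_def
  set z : ℕ → ℂ := fun l => x (resIdx n hn (l+1)) ^ (m (l+1)) * (w l * P l) with hz_def
  set G : ℕ → ℂ := fun l => (((2*((l:ℝ)+1))/M (l+1) : ℝ):ℂ)^(m (l+1)) * z l with hG_def
  show (j:ℝ) ≤ Complex.abs (∑' l : ℕ, G l)
  have hjR : (1:ℝ) ≤ (j:ℝ) := by exact_mod_cast hj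
  -- basic facts about q
  have hq0 : ∀ l : ℕ, 0 ≤ q l := by
    intro l
    have := hMpos (l+1) (by omega)
    positivity
  have hqle : ∀ l : ℕ, q l ≤ 1/(2*((l:ℝ)+1)) := by
    intro l
    have hM := hMpos (l+1) (by omega)
    have h4 := hM4 (l+1) (by omega)
    push_cast at h4
    rw [hq_def, div_le_div_iff₀ hM (by positivity)]
    nlinarith [Nat.cast_nonneg (α := ℝ) l]
  -- facts about ν
  have habsν : ∀ l : ℕ, Complex.abs (ν l) = 1 := by
    intro l
    rcases hν l with h | h <;> rw [h]
    · rw [map_pow, hlam1, one_pow]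
    · rw [map_inv₀, map_pow, hlam1, one_pow, inv_one]
  have hν_ne : ∀ l : ℕ, ν l ≠ 1 := by
    intro l
    have h1 := hlam2 (m (l+1)) (hm1 (l+1) (by omega))
    rcases hν l with h | h <;> rw [h]
    · exact h1
    · intro hc; rw [inv_eq_one] at hc; exact h1 hc
  have hνsub : ∀ l : ℕ, Complex.abs (ν l - 1) = Complex.abs (lam ^ m (l+1) - 1) := by
    intro l
    rcases hν l with h | h <;> rw [h]
    exact abs_inv_sub_one _ (by rw [map_pow, hlam1, one_pow])
  have hνK : ∀ l : ℕ, Complex.abs (ν l ^ K - 1)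
      = Complex.abs (lam ^ (K * m (l+1)) - 1) := by
    intro l
    rcases hν l with h | h <;> rw [h]
    · rw [← pow_mul, mul_comm]
    · rw [inv_pow, ← pow_mul, mul_comm (m (l+1)) K]
      exact abs_inv_sub_one _ (by rw [map_pow, hlam1, one_pow])
  have hApos : ∀ l : ℕ, 1 ≤ l → 0 < Complex.abs (lam ^ m l - 1) := fun l hl =>
    Complex.abs.pos (sub_ne_zero.mpr (hlam2 _ (hm1 l hl)))
  have hPabs : ∀ l : ℕ, Complex.abs (P l)
      = Complex.abs (lam ^ (K * m (l+1)) - 1) / Complex.abs (lam ^ m (l+1) - 1) := by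
    intro l
    rw [hP_def]
    simp only
    rw [absgeom_eq (ν l) (hν_ne l) K, hνK l, hνsub l]
  have hPleK : ∀ l : ℕ, Complex.abs (P l) ≤ K := fun l => absgeom_le _ (habsν l) K
  have hPle2 : ∀ l : ℕ, Complex.abs (P l) ≤ 2 * M (l+1) ^ m (l+1) := by
    intro l
    rw [hPabs l]
    have hA := hApos (l+1) (by omega)
    rw [div_le_iff₀ hA]
    have h2 : Complex.abs (lam ^ (K * m (l+1)) - 1) ≤ 2 := by
      calc Complex.abs (lam ^ (K * m (l+1)) - 1)
          ≤ Complex.abs (lam ^ (K * m (l+1))) + Complex.abs (1:ℂ) := by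
            simpa [sub_eq_add_neg] using Complex.abs.add_le (lam ^ (K * m (l+1))) (-1)
        _ = 2 := by rw [map_pow, hlam1, one_pow, map_one]; norm_num
    calc Complex.abs (lam ^ (K * m (l+1)) - 1) ≤ 2 := h2
      _ = 2 * (Complex.abs (lam ^ m (l+1) - 1) * M (l+1) ^ m (l+1)) := by
          rw [hAM (l+1) (by omega)]; ring
      _ = 2 * M (l+1) ^ m (l+1) * Complex.abs (lam ^ m (l+1) - 1) := by ring
  have hj1 : j - 1 + 1 = j := by omega
  have hPmain : M j ^ m j ≤ Complex.abs (P (j-1)) := by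
    rw [hPabs (j-1), hj1]
    have hA := hApos j hj
    rw [le_div_iff₀ hA]
    calc M j ^ m j * Complex.abs (lam ^ m j - 1)
        = Complex.abs (lam ^ m j - 1) * M j ^ m j := by ring
      _ = 1 := hAM j hj
      _ ≤ Complex.abs (lam ^ (K * m j) - 1) := hC4j
  -- abs of G
  have habsG : ∀ l : ℕ, Complex.abs (G l)
      = q l ^ (m (l+1)) * Complex.abs (x (resIdx n hn (l+1))) ^ (m (l+1))
        * Complex.abs (P l) := by
    intro l
    rw [hG_def, hz_def]
    simp only
    rw [map_mul, map_pow, Complex.abs_ofReal, abs_of_nonneg (hq0 l), map_mul, map_mul,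
      map_pow, hw l, one_mul, mul_assoc]
  -- summability
  have hSum : Summable (fun l : ℕ => Complex.abs (G l)) := by
    rw [hG_def]
    refine (master m M hM4 hMpos hmge z (j * K)
      (by simpa using Nat.mul_le_mul hj hK1) ?_).2
    intro l
    have hm' : 1 ≤ m (l+1) := hm1 (l+1) (by omega)
    have hKR : (1:ℝ) ≤ (K:ℝ) := by exact_mod_cast hK1
    calc Complex.abs (z l)
        ≤ (j:ℝ) ^ (m (l+1)) * ((K:ℝ)) := by
          rw [hz_def]
          simp only
          rw [map_mul, map_pow, map_mul, hw l, one_mul]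
          apply mul_le_mul (pow_le_pow_left₀ (Complex.abs.nonneg _) (hxle _) _)
            (hPleK l) (Complex.abs.nonneg _) (by positivity)
      _ ≤ (j:ℝ) ^ (m (l+1)) * ((K:ℝ)) ^ (m (l+1)) := by
          apply mul_le_mul_of_nonneg_left (le_self_pow₀ hKR (by omega)) (by positivity)
      _ = ((j*K : ℕ):ℝ) ^ (m (l+1)) := by push_cast; rw [mul_pow]
  have hSumG : Summable G := by
    apply Summable.of_norm
    simpa only [Complex.norm_eq_abs] using hSum
  -- split head and tail
  have hsplit := Summable.sum_add_tsum_nat_add (f := G) j hSumG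
  -- tail bound
  have hGtail : ∀ i : ℕ, Complex.abs (G (i+j)) ≤ (K:ℝ) * ((1:ℝ)/2)^(i+rj) := by
    intro i
    have hm' : i + rj ≤ m (i + j + 1) := by
      have h1 := hrm i
      have he : j + i + 1 = i + j + 1 := by omega
      rw [he] at h1
      omega
    have hKR : (0:ℝ) ≤ (K:ℝ) := Nat.cast_nonneg K
    have hqb : q (i+j) * (j:ℝ) ≤ 1/2 := by
      have h1 : q (i+j) * (j:ℝ) ≤ (1/(2*((↑(i+j):ℝ)+1))) * ((↑(i+j):ℝ)+1) := by
        apply mul_le_mul (hqle (i+j)) _ (Nat.cast_nonneg j) (by positivity)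
        push_cast
        linarith [Nat.cast_nonneg (α := ℝ) i]
      have h2 : (1/(2*((↑(i+j):ℝ)+1))) * ((↑(i+j):ℝ)+1) = 1/2 := by
        have : (0:ℝ) < (↑(i+j):ℝ)+1 := by positivity
        field_simp
      linarith
    rw [habsG (i+j)]
    calc q (i+j) ^ m (i+j+1) * Complex.abs (x (resIdx n hn (i+j+1))) ^ m (i+j+1)
          * Complex.abs (P (i+j))
        ≤ q (i+j) ^ m (i+j+1) * (j:ℝ) ^ m (i+j+1) * (K:ℝ) := by
          apply mul_le_mul _ (hPleK (i+j)) (Complex.abs.nonneg _) _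
          · exact mul_le_mul_of_nonneg_left
              (pow_le_pow_left₀ (Complex.abs.nonneg _) (hxle _) _)
              (pow_nonneg (hq0 _) _)
          · exact mul_nonneg (pow_nonneg (hq0 _) _) (by positivity)
      _ = (q (i+j) * (j:ℝ)) ^ m (i+j+1) * (K:ℝ) := by rw [mul_pow]
      _ ≤ ((1:ℝ)/2) ^ m (i+j+1) * (K:ℝ) := by
          apply mul_le_mul_of_nonneg_right _ hKR
          exact pow_le_pow_left₀ (mul_nonneg (hq0 _) (Nat.cast_nonneg j)) hqb _
      _ ≤ ((1:ℝ)/2) ^ (i+rj) * (K:ℝ) := by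
          apply mul_le_mul_of_nonneg_right _ hKR
          exact pow_le_pow_of_le_one (by norm_num) (by norm_num) hm'
      _ = (K:ℝ) * ((1:ℝ)/2)^(i+rj) := mul_comm _ _
  -- tail sum bound
  have hgeo : Summable (fun i : ℕ => ((1:ℝ)/2)^(i+rj)) := by
    simp only [pow_add]
    exact (summable_geometric_of_lt_one (by norm_num) (by norm_num)).mul_right _
  have hmaj : Summable (fun i : ℕ => (K:ℝ) * ((1:ℝ)/2)^(i+rj)) := hgeo.mul_left _
  have hSumTail : Summable (fun i : ℕ => Complex.abs (G (i+j))) :=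
    (summable_nat_add_iff j).mpr hSum
  have htail : Complex.abs (∑' i : ℕ, G (i+j)) < 1 := by
    calc Complex.abs (∑' i : ℕ, G (i+j)) ≤ ∑' i : ℕ, Complex.abs (G (i+j)) := by
          simpa only [Complex.norm_eq_abs] using
            norm_tsum_le_tsum_norm (f := fun i : ℕ => G (i+j))
              (by simpa only [Complex.norm_eq_abs] using hSumTail)
      _ ≤ ∑' i : ℕ, (K:ℝ) * ((1:ℝ)/2)^(i+rj) := Summable.tsum_le_tsum hGtail hSumTail hmaj
      _ = (K:ℝ) * ∑' i : ℕ, ((1:ℝ)/2)^(i+rj) := tsum_mul_left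
      _ < 1 := hC5j
  -- main term lower bound
  have hcast : ((j-1:ℕ):ℝ) + 1 = (j:ℝ) := by exact_mod_cast congrArg (Nat.cast (R := ℝ)) hj1
  have hmain : (2:ℝ)^(m j) ≤ Complex.abs (G (j-1)) := by
    rw [habsG (j-1)]
    simp only [hq_def]
    rw [hj1, hcast]
    have hMj := hMpos j hj
    have hjpos : (0:ℝ) < (j:ℝ) := by linarith
    have h2 : ((2*(j:ℝ)/M j) * (1/(j:ℝ)) * (M j)) = 2 := by field_simp
    calc (2:ℝ)^(m j) = ((2*(j:ℝ)/M j) * (1/(j:ℝ)) * (M j))^(m j) := by rw [h2]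
      _ = (2*(j:ℝ)/M j)^(m j) * (1/(j:ℝ))^(m j) * (M j)^(m j) := by
          rw [mul_pow, mul_pow]
      _ ≤ (2*(j:ℝ)/M j)^(m j) * Complex.abs (x (resIdx n hn j)) ^ (m j)
            * Complex.abs (P (j-1)) := by
          apply mul_le_mul _ hPmain (by positivity) _
          · exact mul_le_mul_of_nonneg_left
              (pow_le_pow_left₀ (by positivity) hxge _) (by positivity)
          · exact mul_nonneg (by positivity) (pow_nonneg (Complex.abs.nonneg _) _)
  -- small terms bound
  have hsmall : ∀ l : ℕ, Complex.abs (G l)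
      ≤ 2 * (2*((l:ℝ)+1))^(m (l+1)) * (j:ℝ)^(m (l+1)) := by
    intro l
    have hM := hMpos (l+1) (by omega)
    rw [habsG l]
    calc q l ^ m (l+1) * Complex.abs (x (resIdx n hn (l+1))) ^ m (l+1)
          * Complex.abs (P l)
        ≤ q l ^ m (l+1) * (j:ℝ) ^ m (l+1) * (2 * M (l+1) ^ m (l+1)) := by
          apply mul_le_mul _ (hPle2 l) (Complex.abs.nonneg _) _
          · exact mul_le_mul_of_nonneg_left
              (pow_le_pow_left₀ (Complex.abs.nonneg _) (hxle _) _)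
              (pow_nonneg (hq0 _) _)
          · exact mul_nonneg (pow_nonneg (hq0 _) _) (by positivity)
      _ = 2 * (q l * M (l+1))^(m (l+1)) * (j:ℝ)^(m (l+1)) := by
          rw [mul_pow]; ring
      _ = 2 * (2*((l:ℝ)+1))^(m (l+1)) * (j:ℝ)^(m (l+1)) := by
          rw [hq_def]
          simp only
          rw [div_mul_cancel₀ _ hM.ne']
  -- head decomposition
  have hhead : ∑ l ∈ range j, G l = ∑ l ∈ range (j-1), G l + G (j-1) := by
    conv_lhs => rw [← hj1]
    exact Finset.sum_range_succ G (j-1)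
  have hIco : ∑ l ∈ range (j-1), (2 * (2*((l:ℝ)+1))^(m (l+1)) * (j:ℝ)^(m (l+1)))
      = ∑ l ∈ Finset.Ico 1 j, 2 * (2*(l:ℝ))^(m l) * (j:ℝ)^(m l) := by
    rw [Finset.sum_Ico_eq_sum_range]
    refine Finset.sum_congr rfl fun l _ => ?_
    rw [Nat.add_comm 1 l]
    push_cast
    ring
  have hsum_small : ∑ l ∈ range (j-1), Complex.abs (G l)
      ≤ ∑ l ∈ Finset.Ico 1 j, 2 * (2*(l:ℝ))^(m l) * (j:ℝ)^(m l) := by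
    rw [← hIco]
    exact Finset.sum_le_sum fun l _ => hsmall l
  have t1 : Complex.abs (G (j-1)) ≤ Complex.abs (∑ l ∈ range j, G l)
      + ∑ l ∈ range (j-1), Complex.abs (G l) := by
    have he : G (j-1) = (∑ l ∈ range j, G l) - ∑ l ∈ range (j-1), G l := by
      rw [hhead]; ring
    calc Complex.abs (G (j-1))
        ≤ Complex.abs (∑ l ∈ range j, G l) + Complex.abs (∑ l ∈ range (j-1), G l) := by
          rw [he]; exact abs_sub_le' _ _
      _ ≤ Complex.abs (∑ l ∈ range j, G l) + ∑ l ∈ range (j-1), Complex.abs (G l) := by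
          have := Complex.abs.sum_le (range (j-1)) G
          linarith [Complex.abs.sum_le (f := G) (range (j-1))]
  have t2 : Complex.abs (∑ l ∈ range j, G l)
      ≤ Complex.abs (∑' l : ℕ, G l) + Complex.abs (∑' i : ℕ, G (i+j)) := by
    have he : (∑ l ∈ range j, G l) = (∑' l : ℕ, G l) - ∑' i : ℕ, G (i+j) := by
      rw [← hsplit]; ring
    rw [he]; exact abs_sub_le' _ _
  linarith [hC2j, htail, hmain, hsum_small, t1, t2]


private lemma iter_fwd {n : ℕ} (lam : ℂ) (a : (Fin n → ℂ) → ℂ)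
    (F : (Fin n → ℂ) × ℂ → (Fin n → ℂ) × ℂ)
    (hF : ∀ p, F p = (fun i => lam * p.1 i, p.2 + a p.1)) :
    ∀ (K : ℕ) (x : Fin n → ℂ) (y : ℂ),
      F^[K] (x, y) = (fun i => lam ^ K * x i,
        y + ∑ t ∈ Finset.range K, a fun i => lam ^ t * x i) := by
  intro K
  induction K with
  | zero =>
    intro x y
    simp only [Function.iterate_zero, id_eq, pow_zero, one_mul, Finset.range_zero,
      Finset.sum_empty, add_zero]
  | succ K ih =>
    intro x y
    rw [Function.iterate_succ_apply, hF]
    simp only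
    rw [ih]
    refine Prod.ext ?_ ?_
    · funext i
      simp only
      rw [pow_succ]
      ring
    · simp only
      rw [Finset.sum_range_succ']
      have h0 : a (fun i => lam ^ 0 * x i) = a x := by
        congr 1; funext i; rw [pow_zero, one_mul]
      have ht : ∀ t, a (fun i => lam ^ t * (lam * x i)) = a (fun i => lam ^ (t+1) * x i) := by
        intro t; congr 1; funext i; rw [pow_succ]; ring
      rw [h0]
      rw [Finset.sum_congr rfl (fun t _ => ht t)]
      ring

private lemma iter_bwd {n : ℕ} (lam : ℂ) (a : (Fin n → ℂ) → ℂ)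
    (Finv : (Fin n → ℂ) × ℂ → (Fin n → ℂ) × ℂ)
    (hFinv : ∀ p, Finv p = (fun i => lam⁻¹ * p.1 i, p.2 - a fun i => lam⁻¹ * p.1 i)) :
    ∀ (K : ℕ) (x : Fin n → ℂ) (y : ℂ),
      Finv^[K] (x, y) = (fun i => (lam⁻¹) ^ K * x i,
        y - ∑ t ∈ Finset.range K, a fun i => (lam⁻¹) ^ (t+1) * x i) := by
  intro K
  induction K with
  | zero =>
    intro x y
    simp only [Function.iterate_zero, id_eq, pow_zero, one_mul, Finset.range_zero,
      Finset.sum_empty, sub_zero]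
  | succ K ih =>
    intro x y
    rw [Function.iterate_succ_apply, hFinv]
    simp only
    rw [ih]
    refine Prod.ext ?_ ?_
    · funext i
      simp only
      rw [pow_succ]
      ring
    · simp only
      rw [Finset.sum_range_succ']
      have h0 : a (fun i => (lam⁻¹) ^ (0+1) * x i) = a (fun i => lam⁻¹ * x i) := by
        congr 1; funext i; rw [zero_add, pow_one]
      have ht : ∀ t, a (fun i => (lam⁻¹) ^ (t+1) * (lam⁻¹ * x i))
          = a (fun i => (lam⁻¹) ^ (t+1+1) * x i) := by
        intro t; congr 1; funext i; rw [pow_succ]; ring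
      rw [Finset.sum_congr rfl (fun t _ => ht t), h0]
      ring

private lemma summable_of_master (m : ℕ → ℕ) (M : ℕ → ℝ)
    (hM4 : ∀ l : ℕ, 1 ≤ l → 4*(l:ℝ)^2 ≤ M l) (hMpos : ∀ l : ℕ, 1 ≤ l → 0 < M l)
    (hmge : ∀ l : ℕ, 1 ≤ l → l ≤ m l)
    (z : ℕ → ℂ) (B : ℕ) (hB : 1 ≤ B)
    (hz : ∀ l : ℕ, Complex.abs (z l) ≤ (B:ℝ)^(m (l+1))) :
    Summable (fun l : ℕ => (((2*((l:ℝ)+1))/M (l+1) : ℝ):ℂ)^(m (l+1)) * z l) := by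
  apply Summable.of_norm
  simpa only [Complex.norm_eq_abs] using (master m M hM4 hMpos hmge z B hB hz).2

private lemma swap_sum {n : ℕ} (hn : 0 < n) (m : ℕ → ℕ) (M : ℕ → ℝ)
    (hM4 : ∀ l : ℕ, 1 ≤ l → 4*(l:ℝ)^2 ≤ M l) (hMpos : ∀ l : ℕ, 1 ≤ l → 0 < M l)
    (hmge : ∀ l : ℕ, 1 ≤ l → l ≤ m l)
    (a : (Fin n → ℂ) → ℂ)
    (ha : ∀ x, a x = ∑' l : ℕ,
      (((2 * ((l : ℝ) + 1)) / M (l + 1) : ℝ) : ℂ) ^ m (l + 1) *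
        x (resIdx n hn (l + 1)) ^ m (l + 1))
    (x : Fin n → ℂ) (j : ℕ) (hj : 1 ≤ j) (hxle : ∀ i, Complex.abs (x i) ≤ j)
    (K : ℕ) (μ : ℕ → ℂ) (hμ : ∀ t, Complex.abs (μ t) = 1) :
    ∑ t ∈ Finset.range K, a (fun i => μ t * x i)
      = ∑' l : ℕ, (((2*((l:ℝ)+1))/M (l+1) : ℝ):ℂ)^(m (l+1)) *
          (x (resIdx n hn (l+1)) ^ (m (l+1)) * ∑ t ∈ Finset.range K, (μ t) ^ (m (l+1))) := by
  have hzb : ∀ t : ℕ, ∀ l : ℕ,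
      Complex.abs ((μ t) ^ m (l+1) * x (resIdx n hn (l+1)) ^ m (l+1)) ≤ (j:ℝ)^(m (l+1)) := by
    intro t l
    rw [map_mul, map_pow, hμ t, one_pow, one_mul, map_pow]
    exact pow_le_pow_left₀ (Complex.abs.nonneg _) (hxle _) _
  have hsummable : ∀ t : ℕ, Summable (fun l : ℕ =>
      (((2*((l:ℝ)+1))/M (l+1) : ℝ):ℂ)^(m (l+1)) *
        ((μ t) ^ m (l+1) * x (resIdx n hn (l+1)) ^ m (l+1))) := fun t =>
    summable_of_master m M hM4 hMpos hmge _ j hj (hzb t)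
  calc ∑ t ∈ Finset.range K, a (fun i => μ t * x i)
      = ∑ t ∈ Finset.range K, ∑' l : ℕ,
          (((2*((l:ℝ)+1))/M (l+1) : ℝ):ℂ)^(m (l+1)) *
            ((μ t) ^ m (l+1) * x (resIdx n hn (l+1)) ^ m (l+1)) := by
        refine Finset.sum_congr rfl fun t _ => ?_
        rw [ha]
        exact tsum_congr fun l => by rw [mul_pow]
    _ = ∑' l : ℕ, ∑ t ∈ Finset.range K,
          (((2*((l:ℝ)+1))/M (l+1) : ℝ):ℂ)^(m (l+1)) *
            ((μ t) ^ m (l+1) * x (resIdx n hn (l+1)) ^ m (l+1)) :=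
        (Summable.tsum_finsetSum fun t _ => hsummable t).symm
    _ = ∑' l : ℕ, (((2*((l:ℝ)+1))/M (l+1) : ℝ):ℂ)^(m (l+1)) *
          (x (resIdx n hn (l+1)) ^ (m (l+1)) * ∑ t ∈ Finset.range K, (μ t) ^ (m (l+1))) := by
        refine tsum_congr fun l => ?_
        rw [← Finset.mul_sum, ← Finset.sum_mul]
        ring

end auxlemmas

/-- The automorphism `F(x,y) = (λx, y + a(x))`, for `λ` a Cremer number and `a` the series
built from sequences satisfying (C1)–(C5), has the finite orbits property in every set
`ℂⁿ × U` with `U ⊆ ℂ` bounded and open: every point of `ℂⁿ × U` either lies on the fixed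
point set `{x = 0}` or has a finite orbit in `ℂⁿ × U`. -/

theorem cremer_automorphism_finite_orbits {n : ℕ} (hn : 0 < n) (lam : ℂ)
    (hlam : IsCremer lam)
    (m : ℕ → ℕ) (M : ℕ → ℝ) (k : ℕ → ℕ) (r : ℕ → ℕ)
    (hC1 : ∀ j : ℕ, 1 ≤ j →
      M j = ‖lam ^ m j - 1‖ ^ (-(1 : ℝ) / (m j)) ∧ 4 * (j : ℝ) ^ 2 ≤ M j)
    (hC2 : ∀ j : ℕ, 1 ≤ j →
      (1 : ℝ) + j + ∑ l ∈ Finset.Ico 1 j,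
          2 * (2 * (l : ℝ)) ^ m l * (j : ℝ) ^ m l ≤ (2 : ℝ) ^ m j)
    (hC3 : ∀ j : ℕ, 2 ≤ j → max (m (j - 1)) (r (j - 1)) < min (m j) (r j))
    (hC4 : ∀ j : ℕ, 1 ≤ j → 1 ≤ ‖lam ^ (k j * m j) - 1‖)
    (hC5 : ∀ j : ℕ, 1 ≤ j → (k j : ℝ) * ∑' i : ℕ, ((1 : ℝ) / 2) ^ (i + r j) < 1)
    (a : (Fin n → ℂ) → ℂ)
    (ha : ∀ x, a x = ∑' l : ℕ,
      (((2 * ((l : ℝ) + 1)) / M (l + 1) : ℝ) : ℂ) ^ m (l + 1) *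
        x (resIdx n hn (l + 1)) ^ m (l + 1))
    (F Finv : (Fin n → ℂ) × ℂ → (Fin n → ℂ) × ℂ)
    (hF : ∀ p, F p = (fun i => lam * p.1 i, p.2 + a p.1))
    (hFinv : ∀ p, Finv p = (fun i => lam⁻¹ * p.1 i, p.2 - a fun i => lam⁻¹ * p.1 i)) :
    ∀ U : Set ℂ, IsOpen U → Bornology.IsBounded U →
      ∀ p : (Fin n → ℂ) × ℂ, p.2 ∈ U →
        p.1 = 0 ∨
        {j : ℤ | ∀ i : ℤ, min 0 j ≤ i → i ≤ max 0 j →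
          (zIter F Finv i p).2 ∈ U}.Finite := by
  -- derived facts
  obtain ⟨hlam1, hlam2, -⟩ := hlam
  have hlam1 : Complex.abs lam = 1 := hlam1
  have hm1 : ∀ l : ℕ, 1 ≤ l → 1 ≤ m l := fun l hl => m_pos_of_C2 m M hC2 l hl
  have hMid := fun (l : ℕ) (hl : 1 ≤ l) =>
    M_identity lam hlam2 m M (fun j hj => (hC1 j hj).1) l hl (hm1 l hl)
  have hM4 : ∀ l : ℕ, 1 ≤ l → 4*(l:ℝ)^2 ≤ M l := fun l hl => (hC1 l hl).2
  have hMpos : ∀ l : ℕ, 1 ≤ l → 0 < M l := fun l hl => (hMid l hl).2.1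
  have hAM : ∀ l : ℕ, 1 ≤ l → Complex.abs (lam ^ m l - 1) * M l ^ m l = 1 :=
    fun l hl => (hMid l hl).2.2
  obtain ⟨hmge, hrm_all⟩ := mono_of_C3 m r hC3 (hm1 1 le_rfl)
  intro U hUopen hUbd p hp
  obtain ⟨x0, y0⟩ := p
  simp only at hp
  rcases eq_or_ne x0 0 with h0 | h0
  · exact Or.inl h0
  right
  obtain ⟨R, hR⟩ := hUbd.subset_ball 0
  have hy0 : Complex.abs y0 < R := by
    have := hR hp
    rwa [Metric.mem_ball, Complex.dist_eq, sub_zero] at this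
  have hex : ∃ i0 : Fin n, x0 i0 ≠ 0 := by
    by_contra h
    push_neg at h
    exact h0 (funext h)
  obtain ⟨i0, hi0⟩ := hex
  have hδ : 0 < Complex.abs (x0 i0) := Complex.abs.pos hi0
  set C : ℝ := Finset.univ.sup' ⟨i0, Finset.mem_univ i0⟩ (fun i => Complex.abs (x0 i)) with hC_def
  have hC : ∀ i, Complex.abs (x0 i) ≤ C := fun i => Finset.le_sup' (fun i => Complex.abs (x0 i)) (Finset.mem_univ i)
  obtain ⟨N, hN⟩ := exists_nat_ge (max (max (2*R+1) C) (1/Complex.abs (x0 i0)))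
  set j : ℕ := N * n + (i0 : ℕ) + 1 with hj_def
  have hj : 1 ≤ j := by omega
  have hNj : (N:ℝ) ≤ (j:ℝ) := by
    have h1 : N ≤ j := le_trans (Nat.le_mul_of_pos_right N hn) (by omega)
    exact_mod_cast h1
  have hjpos : (0:ℝ) < (j:ℝ) := by
    have : (1:ℝ) ≤ (j:ℝ) := by exact_mod_cast hj
    linarith
  have hjR : 2*R + 1 ≤ (j:ℝ) :=
    le_trans (le_trans (le_max_left _ _) (le_max_left _ _)) (le_trans hN hNj)
  have hxle : ∀ i, Complex.abs (x0 i) ≤ (j:ℝ) := fun i =>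
    le_trans (hC i) (le_trans (le_trans (le_max_right _ _) (le_max_left _ _)) (le_trans hN hNj))
  have hres : resIdx n hn j = i0 := by
    have h1 : j - 1 = N * n + (i0 : ℕ) := by omega
    have h2 : (N * n + (i0 : ℕ)) % n = (i0 : ℕ) := by
      rw [Nat.mul_comm, Nat.mul_add_mod]
      exact Nat.mod_eq_of_lt i0.isLt
    apply Fin.ext
    simp [resIdx, h1, h2]
  have hxge : 1/(j:ℝ) ≤ Complex.abs (x0 (resIdx n hn j)) := by
    rw [hres]
    have h1 : 1/Complex.abs (x0 i0) ≤ (j:ℝ) :=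
      le_trans (le_trans (le_max_right _ _) hN) hNj
    rw [div_le_iff₀ hδ] at h1
    rw [div_le_iff₀ hjpos]
    nlinarith
  have hK1 : 1 ≤ k j := by
    by_contra h
    have hk0 : k j = 0 := by omega
    have := hC4 j hj
    rw [hk0, zero_mul, pow_zero, sub_self, norm_zero] at this
    linarith
  have hrm := hrm_all j hj
  have hlamabs : ∀ t : ℕ, Complex.abs (lam ^ t) = 1 := fun t => by
    rw [map_pow, hlam1, one_pow]
  -- forward estimate
  have key_fwd : (j:ℝ) ≤ Complex.abs (∑ t ∈ Finset.range (k j),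
      a fun i => lam ^ t * x0 i) := by
    rw [swap_sum hn m M hM4 hMpos hmge a ha x0 j hj hxle (k j)
      (fun t => lam ^ t) hlamabs]
    have hcong : ∀ l : ℕ,
        (((2*((l:ℝ)+1))/M (l+1) : ℝ):ℂ)^(m (l+1)) *
          (x0 (resIdx n hn (l+1)) ^ (m (l+1)) *
            ∑ t ∈ Finset.range (k j), (lam ^ t) ^ (m (l+1)))
        = (((2*((l:ℝ)+1))/M (l+1) : ℝ):ℂ)^(m (l+1)) *
          (x0 (resIdx n hn (l+1)) ^ (m (l+1)) *
            ((fun _ : ℕ => (1:ℂ)) l * ∑ t ∈ Finset.range (k j),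
              ((fun l : ℕ => lam ^ m (l+1)) l) ^ t)) := by
      intro l
      simp only [one_mul]
      congr 2
      exact Finset.sum_congr rfl fun t _ => pow_right_comm lam t (m (l+1))
    rw [tsum_congr hcong]
    exact key_estimate n hn lam hlam1 hlam2 m M (k j) (r j) hM4 hMpos hAM hm1 hmge
      j hj hrm (hC2 j hj) (hC4 j hj) (hC5 j hj) hK1 x0 hxle hxge
      (fun _ => 1) (fun l => lam ^ m (l+1)) (fun l => by simp)
      (fun l => Or.inl rfl)
  -- backward estimate
  have hlaminvabs : ∀ t : ℕ, Complex.abs ((lam⁻¹) ^ (t+1)) = 1 := fun t => by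
    rw [map_pow, map_inv₀, hlam1, inv_one, one_pow]
  have key_bwd : (j:ℝ) ≤ Complex.abs (∑ t ∈ Finset.range (k j),
      a fun i => (lam⁻¹) ^ (t+1) * x0 i) := by
    rw [swap_sum hn m M hM4 hMpos hmge a ha x0 j hj hxle (k j)
      (fun t => (lam⁻¹) ^ (t+1)) hlaminvabs]
    have hcong : ∀ l : ℕ,
        (((2*((l:ℝ)+1))/M (l+1) : ℝ):ℂ)^(m (l+1)) *
          (x0 (resIdx n hn (l+1)) ^ (m (l+1)) *
            ∑ t ∈ Finset.range (k j), ((lam⁻¹) ^ (t+1)) ^ (m (l+1)))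
        = (((2*((l:ℝ)+1))/M (l+1) : ℝ):ℂ)^(m (l+1)) *
          (x0 (resIdx n hn (l+1)) ^ (m (l+1)) *
            (((fun l : ℕ => (lam ^ m (l+1))⁻¹) l) * ∑ t ∈ Finset.range (k j),
              ((fun l : ℕ => (lam ^ m (l+1))⁻¹) l) ^ t)) := by
      intro l
      congr 2
      rw [Finset.mul_sum]
      refine Finset.sum_congr rfl fun t _ => ?_
      rw [pow_right_comm, inv_pow, pow_succ']
    rw [tsum_congr hcong]
    exact key_estimate n hn lam hlam1 hlam2 m M (k j) (r j) hM4 hMpos hAM hm1 hmge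
      j hj hrm (hC2 j hj) (hC4 j hj) (hC5 j hj) hK1 x0 hxle hxge
      (fun l => (lam ^ m (l+1))⁻¹) (fun l => (lam ^ m (l+1))⁻¹)
      (fun l => by rw [map_inv₀, map_pow, hlam1, one_pow, inv_one])
      (fun l => Or.inr rfl)
  -- the two iterates leave U
  have hFK : (F^[k j] (x0, y0)).2 ∉ U := by
    rw [iter_fwd lam a F hF (k j) x0 y0]
    intro hmem
    simp only at hmem
    have h1 : Complex.abs (y0 + ∑ t ∈ Finset.range (k j), a fun i => lam ^ t * x0 i) < R := by
      have := hR hmem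
      rwa [Metric.mem_ball, Complex.dist_eq, sub_zero] at this
    have h2 : Complex.abs (∑ t ∈ Finset.range (k j), a fun i => lam ^ t * x0 i)
        ≤ Complex.abs (y0 + ∑ t ∈ Finset.range (k j), a fun i => lam ^ t * x0 i)
          + Complex.abs y0 := by
      have h3 := abs_sub_le' (y0 + ∑ t ∈ Finset.range (k j), a fun i => lam ^ t * x0 i) y0
      simpa using h3
    linarith
  have hBK : (Finv^[k j] (x0, y0)).2 ∉ U := by
    rw [iter_bwd lam a Finv hFinv (k j) x0 y0]
    intro hmem
    simp only at hmem
    have h1 : Complex.abs (y0 - ∑ t ∈ Finset.range (k j), a fun i => (lam⁻¹) ^ (t+1) * x0 i) < R := by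
      have := hR hmem
      rwa [Metric.mem_ball, Complex.dist_eq, sub_zero] at this
    have h2 : Complex.abs (∑ t ∈ Finset.range (k j), a fun i => (lam⁻¹) ^ (t+1) * x0 i)
        ≤ Complex.abs y0 + Complex.abs (y0 - ∑ t ∈ Finset.range (k j),
            a fun i => (lam⁻¹) ^ (t+1) * x0 i) := by
      have h3 := abs_sub_le' y0
        (y0 - ∑ t ∈ Finset.range (k j), a fun i => (lam⁻¹) ^ (t+1) * x0 i)
      simpa using h3
    linarith
  -- finiteness
  apply Set.Finite.subset (Set.finite_Icc (-(k j : ℤ)) (k j : ℤ))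
  intro j' hj'
  simp only [Set.mem_setOf_eq] at hj'
  refine Set.mem_Icc.mpr ⟨?_, ?_⟩
  · by_contra h
    push_neg at h
    have hmin : min 0 j' ≤ -(k j : ℤ) := le_trans (min_le_right _ _) (by omega)
    have hmax : -(k j : ℤ) ≤ max 0 j' := le_trans (by omega) (le_max_left _ _)
    have h1 := hj' (-(k j : ℤ)) hmin hmax
    rw [zIter, if_neg (by omega)] at h1
    simp only [neg_neg, Int.toNat_natCast] at h1
    exact hBK h1
  · by_contra h
    push_neg at h
    have hmin : min 0 j' ≤ (k j : ℤ) := le_trans (min_le_left _ _) (by omega)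
    have hmax : (k j : ℤ) ≤ max 0 j' := le_trans (by omega) (le_max_right _ _)
    have h1 := hj' ((k j : ℤ)) hmin hmax
    rw [zIter, if_pos (by omega)] at h1
    simp only [Int.toNat_natCast] at h1
    exact hFK h1
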